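/- The monoid M₆⁽¹⁾ = ⟨a,b | ab = b⟩ is isomorphic to the submonoid of 2×2 upper triangular tropical integer matrices generated by A = [[0,-∞],[-∞,1]] and B = [[1,1],[-∞,-∞]]. -/

import Mathlib

/-- The max-plus tropical semiring `ℤ ∪ {-∞}`: tropical addition is `max`,
tropical multiplication is `+`, and `(0 : T)` is the tropical zero `-∞`. -/
abbrev T : Type := Tropical (WithTop ℤᵒᵈ)

/-- The element of the tropical semiring corresponding to the integer `k`. -/
def t (k : ℤ) : T := Tropical.trop ((OrderDual.toDual k : ℤᵒᵈ) : WithTop ℤᵒᵈ)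

/-- The defining relation of `M₆⁽¹⁾ = ⟨a, b | ab = b⟩`, with `a` encoded as `true`
and `b` as `false`. -/
def rel61 : FreeMonoid Bool → FreeMonoid Bool → Prop :=
  fun u v => u = FreeMonoid.of true * FreeMonoid.of false ∧ v = FreeMonoid.of false

def A : Matrix (Fin 2) (Fin 2) T := !![t 0, 0; 0, t 1]

def B : Matrix (Fin 2) (Fin 2) T := !![t 1, t 1; 0, 0]

/-! ### Auxiliary lemmas about the tropical semiring -/

lemma t_mul (a b : ℤ) : t a * t b = t (a + b) := by
  apply Tropical.untrop_injective
  simp [t, Tropical.untrop_mul]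

lemma t_zero : t 0 = 1 := rfl

lemma t_ne_zero (a : ℤ) : t a ≠ 0 := by
  intro h
  have := congrArg Tropical.untrop h
  simp [t, Tropical.untrop_zero] at this

lemma t_inj {a b : ℤ} (h : t a = t b) : a = b := by
  have := congrArg Tropical.untrop h
  simp [t] at this
  exact_mod_cast congrArg OrderDual.ofDual this

lemma t_add (a b : ℤ) : t a + t b = t (max a b) := by
  apply Tropical.untrop_injective
  rw [Tropical.untrop_add]
  unfold t
  rw [Tropical.untrop_trop, Tropical.untrop_trop, Tropical.untrop_trop,
    ← WithTop.coe_min, toDual_max]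

/-! ### Matrix computations -/

lemma AB : A * B = B := by
  rw [A, B, Matrix.mul_fin_two]
  simp [t_zero, mul_zero, zero_mul, add_zero, zero_add]

lemma Apow (β : ℕ) : A ^ β = !![1, 0; 0, t β] := by
  induction β with
  | zero => simp [Matrix.one_fin_two, t_zero]
  | succ n ih =>
      rw [pow_succ, ih, A, Matrix.mul_fin_two]
      simp [t_mul, t_zero]

lemma Bpow (α : ℕ) : B ^ (α + 1) = !![t (α+1), t (α+1); 0, 0] := by
  induction α with
  | zero => simp [B]
  | succ n ih =>
      rw [pow_succ, ih, B, Matrix.mul_fin_two]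
      simp [t_mul]

lemma BApow (α β : ℕ) : B ^ (α + 1) * A ^ β = !![t (α+1), t (α+1+β); 0, 0] := by
  rw [Bpow, Apow, Matrix.mul_fin_two]
  simp [t_mul]

/-! ### The presented monoid side -/

abbrev P := PresentedMonoid rel61
noncomputable abbrev pa : P := PresentedMonoid.of rel61 true
noncomputable abbrev pb : P := PresentedMonoid.of rel61 false

lemma rel_ab : pa * pb = pb := by
  have : (conGen rel61) (FreeMonoid.of true * FreeMonoid.of false) (FreeMonoid.of false) :=
    ConGen.Rel.of _ _ ⟨rfl, rfl⟩
  exact Quotient.sound this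

lemma nf_exists (x : P) : ∃ α β : ℕ, x = pb ^ α * pa ^ β := by
  refine PresentedMonoid.inductionOn x ?_
  intro a
  · induction a using FreeMonoid.inductionOn' with
    | one => exact ⟨0, 0, by simp⟩
    | of_mul c w ih =>
      obtain ⟨α, β, h⟩ := ih
      have hmk : (PresentedMonoid.mk rel61) (FreeMonoid.of c * w)
          = PresentedMonoid.of rel61 c * PresentedMonoid.mk rel61 w := rfl
      rw [hmk, h]
      cases c with
      | false => exact ⟨α + 1, β, by rw [pow_succ', mul_assoc]⟩
      | true =>
        cases α with
        | zero => exact ⟨0, β + 1, by rw [pow_succ']; simp [mul_assoc]⟩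
        | succ m =>
          refine ⟨m + 1, β, ?_⟩
          rw [pow_succ', ← mul_assoc, ← mul_assoc, rel_ab]

/-! ### The homomorphism -/

noncomputable def fAB : Bool → Matrix (Fin 2) (Fin 2) T := fun x => cond x A B

lemma hrel : ∀ u v, rel61 u v → FreeMonoid.lift fAB u = FreeMonoid.lift fAB v := by
  rintro u v ⟨h1, h2⟩
  subst h1 h2
  simp [fAB, AB]

noncomputable def φ : P →* Matrix (Fin 2) (Fin 2) T := PresentedMonoid.lift fAB hrel

lemma φa : φ pa = A := rfl
lemma φb : φ pb = B := rfl

lemma φnf (α β : ℕ) : φ (pb ^ α * pa ^ β) = B ^ α * A ^ β := by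
  rw [map_mul, map_pow, map_pow, φa, φb]

lemma key {α α' β β' : ℕ} (h : B ^ α * A ^ β = B ^ α' * A ^ β') : α = α' ∧ β = β' := by
  cases α with
  | zero =>
    cases α' with
    | zero =>
      simp only [pow_zero, one_mul, Apow] at h
      have h11 := congrFun (congrFun h 1) 1
      simp at h11
      exact ⟨rfl, Nat.cast_injective (t_inj h11)⟩
    | succ m =>
      rw [BApow, pow_zero, one_mul, Apow] at h
      have h11 := congrFun (congrFun h 1) 1
      simp at h11
      exact absurd h11 (t_ne_zero _)
  | succ n =>
    cases α' with
    | zero =>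
      rw [BApow, pow_zero, one_mul, Apow] at h
      have h11 := congrFun (congrFun h 1) 1
      simp at h11
      exact absurd h11.symm (t_ne_zero _)
    | succ m =>
      rw [BApow, BApow] at h
      have h00 := congrFun (congrFun h 0) 0
      have h01 := congrFun (congrFun h 0) 1
      simp at h00 h01
      have hα : (n : ℤ) + 1 = (m : ℤ) + 1 := t_inj h00
      have hn : n = m := by exact_mod_cast add_right_cancel hα
      subst hn
      have hβ : (n : ℤ) + 1 + β = (n : ℤ) + 1 + β' := t_inj h01
      have : (β : ℤ) = β' := by linarith
      exact ⟨rfl, by exact_mod_cast this⟩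

lemma φinj : Function.Injective φ := by
  intro x y h
  obtain ⟨α, β, rfl⟩ := nf_exists x
  obtain ⟨α', β', rfl⟩ := nf_exists y
  rw [φnf, φnf] at h
  obtain ⟨h1, h2⟩ := key h
  rw [h1, h2]

lemma φmem (x : P) : φ x ∈ Submonoid.closure {A, B} := by
  obtain ⟨α, β, rfl⟩ := nf_exists x
  rw [φnf]
  exact mul_mem (pow_mem (Submonoid.subset_closure (by simp)) _)
    (pow_mem (Submonoid.subset_closure (by simp)) _)

noncomputable def φ' : P →* (Submonoid.closure {A, B} : Submonoid (Matrix (Fin 2) (Fin 2) T)) :=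
  φ.codRestrict _ φmem

lemma φ'bij : Function.Bijective φ' := by
  constructor
  · intro x y h
    exact φinj (congrArg Subtype.val h)
  · rintro ⟨x, hx⟩
    have : ∃ y, φ y = x := by
      refine Submonoid.closure_induction ?_ ?_ ?_ hx
      · rintro z (rfl | rfl)
        · exact ⟨pa, rfl⟩
        · exact ⟨pb, rfl⟩
      · exact ⟨1, map_one φ⟩
      · rintro u v hu hv ⟨yu, rfl⟩ ⟨yv, rfl⟩
        exact ⟨yu * yv, map_mul φ _ _⟩
    obtain ⟨y, hy⟩ := this
    exact ⟨y, Subtype.ext hy⟩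

/-- The monoid `M₆⁽¹⁾ = ⟨a, b | ab = b⟩` is isomorphic to the submonoid of `2 × 2`
upper triangular tropical matrices generated by `A = [[0,-∞],[-∞,1]]` and
`B = [[1,1],[-∞,-∞]]`, via `a ↦ A`, `b ↦ B`. -/
theorem M61_iso_tropical :
    ∃ e : PresentedMonoid rel61 ≃*
        (Submonoid.closure {A, B} : Submonoid (Matrix (Fin 2) (Fin 2) T)),
      (e (PresentedMonoid.of rel61 true) : Matrix (Fin 2) (Fin 2) T) = A ∧
        (e (PresentedMonoid.of rel61 false) : Matrix (Fin 2) (Fin 2) T) = B := by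
  exact ⟨MulEquiv.ofBijective φ' φ'bij, rfl, rfl⟩
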